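/- Let A and B be adapted, increasing, right-continuous processes with left limits on a filtered probability space, and suppose there exist r > 0 and α > 0 such that E(A_{T-} − A_{S-})^r ≤ α · E[B_{T-}^r 1_{{S < T}}] for all stopping times S ≤ T. Then for every moderate function F (continuous increasing, F(0)=0, with F(2λ) ≤ c F(λ) for some c and all λ > 0), one has E F(A_∞) ≤ C(r, α, F) · E F(B_∞). -/

import Mathlib

open MeasureTheory ENNReal Filter Set NNReal


section llpAux

variable {F : ℝ≥0∞ → ℝ≥0∞} {c' : ℝ≥0}

lemma llp_doub (hc : ∀ x, F (2*x) ≤ c' * F x) (k : ℕ) (x : ℝ≥0∞) :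
    F ((2:ℝ≥0∞)^k * x) ≤ (c':ℝ≥0∞)^k * F x := by
  induction k with
  | zero => simp
  | succ n ih =>
    have h2 : (2:ℝ≥0∞)^(n+1) * x = 2 * ((2:ℝ≥0∞)^n * x) := by ring
    rw [h2]
    calc F (2 * ((2:ℝ≥0∞)^n * x)) ≤ c' * F ((2:ℝ≥0∞)^n * x) := hc _
    _ ≤ (c':ℝ≥0∞) * ((c':ℝ≥0∞)^n * F x) := mul_le_mul_right ih _
    _ = (c':ℝ≥0∞)^(n+1) * F x := by ring

lemma llp_small (hFcont : Continuous F) (hF0 : F 0 = 0) {ε : ℝ≥0∞} (hε : 0 < ε) :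
    ∃ y : ℝ≥0∞, 0 < y ∧ y ≠ ⊤ ∧ F y < ε := by
  have h := hFcont.tendsto 0
  rw [hF0] at h
  have hpre : F ⁻¹' (Set.Iio ε) ∈ nhds (0:ℝ≥0∞) := h (Iio_mem_nhds hε)
  obtain ⟨η, hη0, hη⟩ := ENNReal.nhds_zero_basis.mem_iff.mp hpre
  by_cases hηt : η = ⊤
  · exact ⟨1, one_pos, one_ne_top, hη (by rw [hηt]; exact mem_Iio.mpr one_lt_top)⟩
  · refine ⟨η/2, ENNReal.half_pos hη0.ne', ?_, hη (ENNReal.half_lt_self hη0.ne' hηt)⟩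
    exact (ENNReal.div_lt_top hηt (by norm_num)).ne

lemma llp_exists_zpow_lt {x : ℝ≥0∞} (hx : 0 < x) : ∃ k : ℤ, (2:ℝ≥0∞)^k < x := by
  obtain ⟨n, hn⟩ := ENNReal.exists_nat_gt (show x⁻¹ ≠ ⊤ by simpa using hx.ne')
  refine ⟨-(n:ℤ), ?_⟩
  have h2 : x⁻¹ < 2^n := hn.trans_le (by exact_mod_cast Nat.cast_le.mpr (Nat.lt_two_pow_self (n := n)).le)
  have h3 := ENNReal.inv_lt_inv.mpr h2
  rw [inv_inv] at h3
  calc (2:ℝ≥0∞) ^ (-(n:ℤ)) = ((2:ℝ≥0∞)^(n:ℤ))⁻¹ := ENNReal.zpow_neg _ _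
  _ = ((2:ℝ≥0∞)^(n:ℕ))⁻¹ := by rw [zpow_natCast]
  _ < x := h3

lemma llp_exists_lt_zpow {x : ℝ≥0∞} (hx : x ≠ ⊤) : ∃ k : ℤ, x < (2:ℝ≥0∞)^k := by
  obtain ⟨n, hn⟩ := ENNReal.exists_nat_gt hx
  refine ⟨(n:ℤ), ?_⟩
  rw [zpow_natCast]
  exact hn.trans_le (by exact_mod_cast Nat.cast_le.mpr (Nat.lt_two_pow_self (n := n)).le)

lemma llp_fin (hFmono : Monotone F) (hFcont : Continuous F) (hF0 : F 0 = 0)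
    (hc : ∀ x, F (2*x) ≤ c' * F x) {x : ℝ≥0∞} (hx : x ≠ ⊤) : F x ≠ ⊤ := by
  obtain ⟨y, hy0, hyt, hy1⟩ := llp_small hFcont hF0 (ε := 1) one_pos
  obtain ⟨n, hn⟩ := ENNReal.exists_nat_gt (show x/y ≠ ⊤ from (ENNReal.div_lt_top hx hy0.ne').ne)
  have hxn : x ≤ 2^n * y := by
    have h2 : x/y < 2^n := hn.trans_le (by exact_mod_cast Nat.cast_le.mpr (Nat.lt_two_pow_self (n := n)).le)
    rw [ENNReal.div_lt_iff (Or.inl hy0.ne') (Or.inl hyt)] at h2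
    exact h2.le
  have := (hFmono hxn).trans (llp_doub hc n y)
  refine ne_top_of_le_ne_top ?_ this
  exact (ENNReal.mul_lt_top (ENNReal.pow_lt_top ENNReal.coe_lt_top) (hy1.trans ENNReal.one_lt_top)).ne

lemma llp_tele {a : ℤ → ℝ≥0∞} (ha : Monotone a) (m : ℤ) (i : ℕ) :
    (∑ j ∈ Finset.Icc m (m+i), (a (j+1) - a j)) + a m = a (m+i+1) := by
  induction i with
  | zero => simp [tsub_add_cancel_of_le (ha (by omega : m ≤ m+1))]
  | succ n ih =>
    have hins : Finset.Icc m (m+((n:ℕ)+1:ℕ):ℤ) = insert (m+(n:ℤ)+1) (Finset.Icc m (m+(n:ℕ))) := by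
      ext j; simp [Finset.mem_Icc]; omega
    rw [hins, Finset.sum_insert (by simp [Finset.mem_Icc])]
    rw [add_assoc, ih]
    have : m + (n:ℤ) + 1 + 1 = m + ((n:ℕ)+1:ℕ) + 1 := by push_cast; ring
    rw [← this]
    exact tsub_add_cancel_of_le (ha (by omega))

lemma llp_LB_aux {a : ℤ → ℝ≥0∞} (ha : Monotone a)
    (ha0 : ∀ ε : ℝ≥0∞, 0 < ε → ∃ m : ℤ, a m < ε)
    (p : ℤ → Prop) (k : ℤ) (hp : ∀ j ≤ k, p j) :
    a (k+1) ≤ ∑' j : ℤ, ⨆ (_ : p j), (a (j+1) - a j) := by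
  set S := ∑' j : ℤ, ⨆ (_ : p j), (a (j+1) - a j) with hS
  rcases eq_or_ne S ⊤ with h | h
  · rw [h]; exact le_top
  apply ENNReal.le_of_forall_pos_le_add
  intro ε hε _
  obtain ⟨m0, hm0⟩ := ha0 ε (by exact_mod_cast hε)
  set m := min m0 k with hm
  have hmk : m ≤ k := min_le_right _ _
  have hmε : a m ≤ (ε:ℝ≥0∞) := ((ha (min_le_left _ _)).trans_lt hm0).le
  have htele := llp_tele ha m (k - m).toNat
  rw [show m + ((k-m).toNat:ℤ) = k by omega] at htele
  calc a (k+1) = (∑ j ∈ Finset.Icc m k, (a (j+1) - a j)) + a m := htele.symm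
  _ ≤ (∑ j ∈ Finset.Icc m k, ⨆ (_ : p j), (a (j+1) - a j)) + a m := by
      apply add_le_add_left
      apply Finset.sum_le_sum
      intro j hj
      rw [iSup_pos (hp j (Finset.mem_Icc.mp hj).2)]
  _ ≤ S + ε := add_le_add (ENNReal.sum_le_tsum _) hmε

lemma llp_iSup_ite (p : Prop) [Decidable p] (v : ℝ≥0∞) :
    (⨆ (_ : p), v) = if p then v else 0 := by
  by_cases h : p <;> simp [h]

lemma llp_UB_aux {a : ℤ → ℝ≥0∞} (ha : Monotone a) (p : ℤ → Prop)
    {C : ℝ≥0∞} (hC : ∀ k, p k → a (k+1) ≤ C) :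
    (∑' j : ℤ, ⨆ (_ : p j), (a (j+1) - a j)) ≤ C := by
  classical
  apply Summable.tsum_le_of_sum_le ENNReal.summable
  intro s
  have hsum : (∑ j ∈ s, ⨆ (_ : p j), (a (j+1) - a j)) = ∑ j ∈ s.filter p, (a (j+1) - a j) := by
    rw [Finset.sum_filter]
    exact Finset.sum_congr rfl fun j _ => llp_iSup_ite _ _
  rw [hsum]
  set s' := s.filter p with hs'
  rcases s'.eq_empty_or_nonempty with h | h
  · rw [h]
    simp
  · set k := s'.max' h with hk
    set m := s'.min' h with hmm
    have hmk : m ≤ k := (s'.min'_le k (s'.max'_mem h))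
    have hsub : s' ⊆ Finset.Icc m k := by
      intro j hj
      exact Finset.mem_Icc.mpr ⟨s'.min'_le j hj, s'.le_max' j hj⟩
    calc ∑ j ∈ s', (a (j+1) - a j) ≤ ∑ j ∈ Finset.Icc m k, (a (j+1) - a j) :=
          Finset.sum_le_sum_of_subset hsub
    _ ≤ (∑ j ∈ Finset.Icc m k, (a (j+1) - a j)) + a m := le_self_add
    _ = a (k+1) := by
        have htele := llp_tele ha m (k - m).toNat
        rwa [show m + ((k-m).toNat:ℤ) = k by omega] at htele
    _ ≤ C := hC k (Finset.mem_filter.mp (s'.max'_mem h)).2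

end llpAux

section llpF

variable {F : ℝ≥0∞ → ℝ≥0∞}

lemma llp_a_mono (hFmono : Monotone F) : Monotone (fun j : ℤ => F ((2:ℝ≥0∞)^j)) :=
  fun _ _ h => hFmono (ENNReal.zpow_le_of_le one_le_two h)

lemma llp_a_small (hFcont : Continuous F) (hFmono : Monotone F) (hF0 : F 0 = 0) :
    ∀ ε : ℝ≥0∞, 0 < ε → ∃ m : ℤ, F ((2:ℝ≥0∞)^m) < ε := by
  intro ε hε
  obtain ⟨y, hy0, _, hy⟩ := llp_small hFcont hF0 hε
  obtain ⟨m, hm⟩ := llp_exists_zpow_lt hy0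
  exact ⟨m, (hFmono hm.le).trans_lt hy⟩

lemma llp_LB (hFcont : Continuous F) (hFmono : Monotone F) (hF0 : F 0 = 0) (x : ℝ≥0∞) :
    F x ≤ ∑' j : ℤ, ⨆ (_ : (2:ℝ≥0∞)^j < x), (F (2^(j+1)) - F (2^j)) := by
  have hamono := llp_a_mono hFmono
  have hasmall := llp_a_small hFcont hFmono hF0
  rcases eq_or_ne x 0 with rfl | hx0
  · rw [hF0]; exact zero_le
  rcases eq_or_ne x ⊤ with rfl | hxt
  · have hall : ∀ k : ℤ, F ((2:ℝ≥0∞)^(k+1))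
        ≤ ∑' j : ℤ, ⨆ (_ : (2:ℝ≥0∞)^j < ⊤), (F ((2:ℝ≥0∞)^(j+1)) - F (2^j)) :=
      fun k => llp_LB_aux hamono hasmall _ k
        (fun j _ => ENNReal.zpow_lt_top (by norm_num) (by norm_num) j)
    have htend : Tendsto (fun k : ℕ => F ((2:ℝ≥0∞)^((k:ℤ)+1))) atTop (nhds (F ⊤)) := by
      apply (hFcont.tendsto ⊤).comp
      apply ENNReal.tendsto_nhds_top
      intro n
      filter_upwards [eventually_ge_atTop (n+1)] with k hk
      calc (n:ℝ≥0∞) < (k:ℝ≥0∞) := by exact_mod_cast hk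
      _ ≤ (2:ℝ≥0∞)^(k:ℕ) := by exact_mod_cast Nat.cast_le.mpr (Nat.lt_two_pow_self (n := k)).le
      _ ≤ (2:ℝ≥0∞)^((k:ℤ)+1) := by
          rw [← zpow_natCast (2:ℝ≥0∞) k]
          exact ENNReal.zpow_le_of_le one_le_two (by omega)
    exact le_of_tendsto' htend fun k => hall (k:ℤ)
  · obtain ⟨K, hK⟩ := llp_exists_lt_zpow hxt
    obtain ⟨k₀, hk₀, hk₀max⟩ := Int.exists_greatest_of_bdd
      ⟨K, fun z hz => by
        by_contra h
        exact absurd ((ENNReal.zpow_le_of_le one_le_two (not_le.mp h).le).trans_lt hz)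
          (not_lt.mpr hK.le)⟩
      (llp_exists_zpow_lt (pos_iff_ne_zero.mpr hx0))
    have hxle : x ≤ (2:ℝ≥0∞)^(k₀+1) := by
      by_contra h
      exact absurd (hk₀max _ (not_le.mp h)) (by omega)
    calc F x ≤ F ((2:ℝ≥0∞)^(k₀+1)) := hFmono hxle
    _ ≤ _ := llp_LB_aux hamono hasmall _ k₀
        (fun j hj => (ENNReal.zpow_le_of_le one_le_two hj).trans_lt hk₀)

lemma llp_UB (hFmono : Monotone F) (l : ℤ) (x : ℝ≥0∞) :
    (∑' j : ℤ, ⨆ (_ : (2:ℝ≥0∞)^(j-l) ≤ x), (F (2^(j+1)) - F (2^j)))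
      ≤ F ((2:ℝ≥0∞)^(l+1) * x) := by
  apply llp_UB_aux (llp_a_mono hFmono)
  intro k hk
  apply hFmono
  calc (2:ℝ≥0∞)^(k+1) = 2^(l+1) * 2^(k-l) := by
        rw [← ENNReal.zpow_add (by norm_num) (by norm_num)]; ring_nf
  _ ≤ 2^(l+1) * x := mul_le_mul_right hk _

end llpF

section llpHit
variable {Ω : Type} [mΩ : MeasurableSpace Ω]
noncomputable def llpHitting (X : ℝ≥0 → Ω → ℝ≥0∞) (lam : ℝ≥0∞) (ω : Ω) : ℝ≥0∞ :=
  ⨅ (s : ℝ≥0) (_ : lam ≤ X s ω), (s : ℝ≥0∞)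
omit mΩ in
lemma llpHitting_le (X : ℝ≥0 → Ω → ℝ≥0∞) (lam : ℝ≥0∞) (ω : Ω) {s : ℝ≥0}
    (h : lam ≤ X s ω) : llpHitting X lam ω ≤ (s : ℝ≥0∞) := iInf₂_le s h
omit mΩ in
lemma llpHitting_eq_top {X : ℝ≥0 → Ω → ℝ≥0∞} {lam : ℝ≥0∞} {ω : Ω}
    (h : ∀ s : ℝ≥0, ¬ lam ≤ X s ω) : llpHitting X lam ω = ⊤ := by
  rw [llpHitting]; simp only [iInf_eq_top]; intro s hs; exact absurd hs (h s)
omit mΩ in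
lemma llpHitting_exists {X : ℝ≥0 → Ω → ℝ≥0∞} {lam : ℝ≥0∞} {ω : Ω}
    (h : llpHitting X lam ω ≠ ⊤) : ∃ s : ℝ≥0, lam ≤ X s ω := by
  by_contra hno
  push_neg at hno
  exact h (llpHitting_eq_top fun s hs => absurd hs (not_le.mpr (hno s)))
omit mΩ in
lemma llpHitting_le_iff {X : ℝ≥0 → Ω → ℝ≥0∞} (hmono : ∀ ω, Monotone fun t => X t ω)
    (hrc : ∀ ω t, Tendsto (fun s => X s ω) (nhdsWithin t (Set.Ioi t)) (nhds (X t ω)))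
    {lam : ℝ≥0∞} {ω : Ω} {t : ℝ≥0} :
    llpHitting X lam ω ≤ (t : ℝ≥0∞) ↔ lam ≤ X t ω := by
  constructor
  · intro h
    have key : ∀ u : ℝ≥0, t < u → lam ≤ X u ω := by
      intro u hu
      have h2 : llpHitting X lam ω < (u:ℝ≥0∞) := h.trans_lt (by exact_mod_cast hu)
      rw [llpHitting] at h2
      obtain ⟨s, hs⟩ := iInf_lt_iff.mp h2
      obtain ⟨hls, hsu⟩ := iInf_lt_iff.mp hs
      exact hls.trans (hmono ω (le_of_lt (by exact_mod_cast hsu)))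
    refine ge_of_tendsto (hrc ω t) ?_
    filter_upwards [self_mem_nhdsWithin] with u hu
    exact key u hu
  · intro h
    exact llpHitting_le X lam ω h
omit mΩ in
lemma llp_sup_nat {X : ℝ≥0 → Ω → ℝ≥0∞} (hmono : ∀ ω, Monotone fun t => X t ω) (ω : Ω) :
    (⨆ t : ℝ≥0, X t ω) = ⨆ n : ℕ, X (n:ℝ≥0) ω :=
  le_antisymm (iSup_le fun t => le_iSup_of_le ⌈t⌉₊ (hmono ω (Nat.le_ceil t)))
    (iSup_le fun n => le_iSup (fun t => X t ω) ((n:ℕ):ℝ≥0))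
lemma llp_sup_meas {ℱ : Filtration ℝ≥0 mΩ} {X : ℝ≥0 → Ω → ℝ≥0∞} (hX : Adapted ℱ X)
    (hmono : ∀ ω, Monotone fun t => X t ω) :
    Measurable fun ω => ⨆ t : ℝ≥0, X t ω := by
  have h : (fun ω => ⨆ t : ℝ≥0, X t ω) = fun ω => ⨆ n : ℕ, X (n:ℝ≥0) ω := by
    funext ω; exact llp_sup_nat hmono ω
  rw [h]
  exact Measurable.iSup fun n => ((hX _)).mono (ℱ.le _) le_rfl
end llpHit

lemma llp_goodlambda {Ω : Type} [mΩ : MeasurableSpace Ω] (P : Measure Ω)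
    (ℱ : Filtration ℝ≥0 mΩ) (A B : ℝ≥0 → Ω → ℝ≥0∞)
    (hA : Adapted ℱ A) (hB : Adapted ℱ B)
    (hAmono : ∀ ω, Monotone fun t => A t ω) (hBmono : ∀ ω, Monotone fun t => B t ω)
    (hArc : ∀ ω t, Tendsto (fun s => A s ω) (nhdsWithin t (Set.Ioi t)) (nhds (A t ω)))
    (hBrc : ∀ ω t, Tendsto (fun s => B s ω) (nhdsWithin t (Set.Ioi t)) (nhds (B t ω)))
    (r : ℝ) (hr : 0 < r) (α : ℝ≥0)
    (hyp : ∀ S T : Ω → ℝ≥0, IsStoppingTime ℱ (fun ω => (S ω : WithTop ℝ≥0)) →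
        IsStoppingTime ℱ (fun ω => (T ω : WithTop ℝ≥0)) → S ≤ T →
        ∫⁻ ω, ((⨆ (s : ℝ≥0) (_ : s < T ω), A s ω) - ⨆ (s : ℝ≥0) (_ : s < S ω), A s ω) ^ r ∂P
          ≤ α * ∫⁻ ω in {ω | S ω < T ω}, (⨆ (s : ℝ≥0) (_ : s < T ω), B s ω) ^ r ∂P)
    (lam δ : ℝ≥0∞) (hlam0 : 0 < lam) (hlamt : lam ≠ ⊤) :
    P {ω | 2 * lam < ⨆ t, A t ω}
      ≤ (α : ℝ≥0∞) * δ^r * P {ω | lam ≤ ⨆ t, A t ω} + P {ω | δ * lam ≤ ⨆ t, B t ω} := by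
  set τ := llpHitting A lam with hτdef
  set τ' := llpHitting A (2*lam) with hτ'def
  set ρ := llpHitting B (δ*lam) with hρdef
  -- the per-n good event
  set G : ℕ → Set Ω := fun n => {ω | 2*lam ≤ A (n:ℝ≥0) ω} ∩ {ω | (⨆ t, B t ω) < δ*lam}
    with hGdef
  have hGmeas : ∀ n, MeasurableSet (G n) := by
    intro n
    apply MeasurableSet.inter
    · exact ((hA _).mono (ℱ.le _) le_rfl) measurableSet_Ici
    · exact (llp_sup_meas hB hBmono) measurableSet_Iio
  -- main estimate for each n
  have hmain : ∀ n : ℕ, P (G n) ≤ (α : ℝ≥0∞) * δ^r * P {ω | lam ≤ ⨆ t, A t ω} := by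
    intro n
    set m : Ω → ℝ≥0∞ := fun ω => (τ' ω + 1) ⊓ ρ ω ⊓ ((n:ℝ≥0∞)+1) with hmdef
    have hmne : ∀ ω, m ω ≠ ⊤ := by
      intro ω
      refine ne_top_of_le_ne_top ?_ inf_le_right
      simp
    have hmle : ∀ ω, m ω ≤ ((n:ℝ≥0)+1 : ℝ≥0∞) := by
      intro ω; exact le_trans inf_le_right (by push_cast; exact le_rfl)
    set T : Ω → ℝ≥0 := fun ω => (m ω).toNNReal with hTdef
    set S : Ω → ℝ≥0 := fun ω => (τ ω ⊓ m ω).toNNReal with hSdef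
    have hTcoe : ∀ ω, (T ω : ℝ≥0∞) = m ω := fun ω => ENNReal.coe_toNNReal (hmne ω)
    have hScoe : ∀ ω, (S ω : ℝ≥0∞) = τ ω ⊓ m ω := fun ω =>
      ENNReal.coe_toNNReal (ne_top_of_le_ne_top (hmne ω) inf_le_right)
    have hST : S ≤ T := by
      intro ω
      have := ENNReal.toNNReal_mono (hmne ω) (inf_le_right : τ ω ⊓ m ω ≤ m ω)
      exact this
    -- stopping times
    have hTstop : IsStoppingTime ℱ (fun ω => (T ω : WithTop ℝ≥0)) := by
      intro t
      simp only [WithTop.coe_le_coe]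
      have hset : {ω | T ω ≤ t} = ({ω | τ' ω + 1 ≤ (t:ℝ≥0∞)} ∪ {ω | ρ ω ≤ (t:ℝ≥0∞)})
          ∪ {ω | ((n:ℝ≥0∞)+1 ≤ (t:ℝ≥0∞))} := by
        ext ω
        have : T ω ≤ t ↔ m ω ≤ (t:ℝ≥0∞) := by
          rw [← ENNReal.coe_le_coe, hTcoe]
        simp only [Set.mem_setOf_eq, Set.mem_union, this, hmdef, inf_le_iff]
      rw [hset]
      refine MeasurableSet.union (MeasurableSet.union ?_ ?_) (MeasurableSet.const _)
      · -- {τ' + 1 ≤ t}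
        by_cases h1 : (1:ℝ≥0) ≤ t
        · have hset2 : {ω | τ' ω + 1 ≤ (t:ℝ≥0∞)} = {ω | 2*lam ≤ A (t-1) ω} := by
            ext ω
            simp only [Set.mem_setOf_eq]
            have hco : ((t - 1 : ℝ≥0) : ℝ≥0∞) = (t:ℝ≥0∞) - 1 := by
              rw [ENNReal.coe_sub]; norm_num
            constructor
            · intro h
              rw [← llpHitting_le_iff hAmono hArc, ← hτ'def, hco]
              calc τ' ω = (τ' ω + 1) - 1 := by
                    rw [ENNReal.add_sub_cancel_right one_ne_top]
              _ ≤ (t:ℝ≥0∞) - 1 := tsub_le_tsub_right h 1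
            · intro h
              rw [← llpHitting_le_iff hAmono hArc, ← hτ'def] at h
              have h2 : τ' ω + 1 ≤ ((t-1:ℝ≥0):ℝ≥0∞) + 1 := add_le_add_left h 1
              rwa [hco, tsub_add_cancel_of_le (by exact_mod_cast h1 : (1:ℝ≥0∞) ≤ t)] at h2
          rw [hset2]
          exact ℱ.mono (tsub_le_self) _
            (show MeasurableSet[ℱ (t-1)] _ from (hA (t-1)) measurableSet_Ici)
        · have hset2 : {ω | τ' ω + 1 ≤ (t:ℝ≥0∞)} = (∅ : Set Ω) := by
            ext ω
            simp only [Set.mem_setOf_eq, Set.mem_empty_iff_false, iff_false, not_le]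
            calc (t:ℝ≥0∞) < (1:ℝ≥0∞) := by exact_mod_cast not_le.mp h1
            _ ≤ τ' ω + 1 := le_add_self
          rw [hset2]
          exact @MeasurableSet.empty _ (ℱ t)
      · -- {ρ ≤ t}
        have hset2 : {ω | ρ ω ≤ (t:ℝ≥0∞)} = {ω | δ*lam ≤ B t ω} := by
          ext ω
          simp only [Set.mem_setOf_eq]
          exact llpHitting_le_iff hBmono hBrc
        rw [hset2]
        exact show MeasurableSet[ℱ t] _ from (hB t) measurableSet_Ici
    have hSstop : IsStoppingTime ℱ (fun ω => (S ω : WithTop ℝ≥0)) := by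
      intro t
      simp only [WithTop.coe_le_coe]
      have hset : {ω | S ω ≤ t} = {ω | lam ≤ A t ω} ∪ {ω | T ω ≤ t} := by
        ext ω
        have h1 : S ω ≤ t ↔ τ ω ⊓ m ω ≤ (t:ℝ≥0∞) := by
          rw [← ENNReal.coe_le_coe, hScoe]
        have h2 : T ω ≤ t ↔ m ω ≤ (t:ℝ≥0∞) := by
          rw [← ENNReal.coe_le_coe, hTcoe]
        have h3 : τ ω ≤ (t:ℝ≥0∞) ↔ lam ≤ A t ω := llpHitting_le_iff hAmono hArc
        simp only [Set.mem_setOf_eq, Set.mem_union, h1, h2, inf_le_iff, ← h3]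
      rw [hset]
      exact MeasurableSet.union
        (show MeasurableSet[ℱ t] _ from (hA t) measurableSet_Ici) (by simpa only [WithTop.coe_le_coe] using hTstop t)
    -- key facts on G n
    have hGfacts : ∀ ω ∈ G n,
        lam ≤ (⨆ (s : ℝ≥0) (_ : s < T ω), A s ω) - ⨆ (s : ℝ≥0) (_ : s < S ω), A s ω := by
      intro ω hω
      obtain ⟨h2lam, hBsup⟩ := hω
      simp only [Set.mem_setOf_eq] at h2lam hBsup
      have hρtop : ρ ω = ⊤ := by
        apply llpHitting_eq_top
        intro s hs
        exact absurd (hs.trans (le_iSup (fun t => B t ω) s)) (not_le.mpr hBsup)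
      have hτ'n : τ' ω ≤ ((n:ℝ≥0):ℝ≥0∞) := llpHitting_le A (2*lam) ω h2lam
      have hτ'ne : τ' ω ≠ ⊤ := ne_top_of_le_ne_top (by simp) hτ'n
      have hmeq : m ω = τ' ω + 1 := by
        rw [hmdef]
        simp only [hρtop, inf_top_eq]
        exact inf_eq_left.mpr (by
          apply add_le_add_left
          exact hτ'n.trans (by exact_mod_cast le_rfl))
      -- upper bound for the T-left-limit
      have hup : 2*lam ≤ ⨆ (s : ℝ≥0) (_ : s < T ω), A s ω := by
        set s₀ : ℝ≥0 := (τ' ω).toNNReal with hs₀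
        have hs₀coe : (s₀ : ℝ≥0∞) = τ' ω := ENNReal.coe_toNNReal hτ'ne
        have hs₀T : s₀ < T ω := by
          rw [← ENNReal.coe_lt_coe, hs₀coe, hTcoe, hmeq]
          exact ENNReal.lt_add_right hτ'ne one_ne_zero
        have hAs₀ : 2*lam ≤ A s₀ ω := by
          rw [← llpHitting_le_iff hAmono hArc, ← hτ'def, hs₀coe]
        exact le_iSup₂_of_le s₀ hs₀T hAs₀
      have hdown : (⨆ (s : ℝ≥0) (_ : s < S ω), A s ω) ≤ lam := by
        apply iSup₂_le
        intro s hs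
        have hsS : (s:ℝ≥0∞) < τ ω := by
          calc (s:ℝ≥0∞) < (S ω : ℝ≥0∞) := by exact_mod_cast hs
          _ = τ ω ⊓ m ω := hScoe ω
          _ ≤ τ ω := inf_le_left
        have hnle : ¬ lam ≤ A s ω := fun hcon =>
          absurd (llpHitting_le A lam ω hcon) (not_le.mpr hsS)
        exact (not_le.mp hnle).le
      calc lam = 2*lam - lam := by rw [two_mul, ENNReal.add_sub_cancel_right hlamt]
      _ ≤ _ := tsub_le_tsub hup hdown
    -- B left limit at T is at most δ*lam
    have hBTle : ∀ ω, (⨆ (s : ℝ≥0) (_ : s < T ω), B s ω) ≤ δ*lam := by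
      intro ω
      apply iSup₂_le
      intro s hs
      have hsρ : (s:ℝ≥0∞) < ρ ω := by
        calc (s:ℝ≥0∞) < (T ω:ℝ≥0∞) := by exact_mod_cast hs
        _ = m ω := hTcoe ω
        _ ≤ ρ ω := le_trans inf_le_left inf_le_right
      have hnle : ¬ δ*lam ≤ B s ω := fun hcon =>
        absurd (llpHitting_le B (δ*lam) ω hcon) (not_le.mpr hsρ)
      exact (not_le.mp hnle).le
    have hkey := hyp S T hSstop hTstop hST
    have hlow : lam^r * P (G n) ≤
        ∫⁻ ω, ((⨆ (s:ℝ≥0) (_ : s < T ω), A s ω) - ⨆ (s:ℝ≥0) (_ : s < S ω), A s ω)^r ∂P := by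
      rw [← lintegral_indicator_const (hGmeas n) (lam^r)]
      apply lintegral_mono
      intro ω
      by_cases hω : ω ∈ G n
      · rw [Set.indicator_of_mem hω]
        exact ENNReal.rpow_le_rpow (hGfacts ω hω) hr.le
      · rw [Set.indicator_of_notMem hω]
        exact zero_le
    have hST2 : {ω | S ω < T ω} ⊆ {ω | lam ≤ ⨆ t, A t ω} := by
      intro ω hω
      simp only [Set.mem_setOf_eq] at hω ⊢
      have hτm : τ ω < m ω := by
        have h1 : τ ω ⊓ m ω < m ω := by
          rw [← hScoe ω, ← hTcoe ω]; exact_mod_cast hω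
        by_contra hcon
        rw [inf_eq_right.mpr (not_lt.mp hcon)] at h1
        exact lt_irrefl _ h1
      have hτne : τ ω ≠ ⊤ := hτm.ne_top
      obtain ⟨s, hs⟩ := llpHitting_exists hτne
      exact hs.trans (le_iSup (fun t => A t ω) s)
    have hhigh : (α:ℝ≥0∞) * ∫⁻ ω in {ω | S ω < T ω}, (⨆ (s:ℝ≥0) (_ : s < T ω), B s ω)^r ∂P
        ≤ (α:ℝ≥0∞) * ((δ*lam)^r * P {ω | lam ≤ ⨆ t, A t ω}) := by
      apply mul_le_mul_right
      calc ∫⁻ ω in {ω | S ω < T ω}, (⨆ (s:ℝ≥0) (_ : s < T ω), B s ω)^r ∂P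
          ≤ ∫⁻ _ω in {ω | S ω < T ω}, (δ*lam)^r ∂P :=
            lintegral_mono fun ω => ENNReal.rpow_le_rpow (hBTle ω) hr.le
      _ = (δ*lam)^r * P {ω | S ω < T ω} := setLIntegral_const _ _
      _ ≤ (δ*lam)^r * P {ω | lam ≤ ⨆ t, A t ω} := mul_le_mul_right (measure_mono hST2) _
    have hfinal : lam^r * P (G n) ≤ lam^r * ((α:ℝ≥0∞) * δ^r * P {ω | lam ≤ ⨆ t, A t ω}) := by
      calc lam^r * P (G n) ≤ _ := hlow
      _ ≤ _ := hkey
      _ ≤ (α:ℝ≥0∞) * ((δ*lam)^r * P {ω | lam ≤ ⨆ t, A t ω}) := hhigh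
      _ = lam^r * ((α:ℝ≥0∞) * δ^r * P {ω | lam ≤ ⨆ t, A t ω}) := by
          rw [ENNReal.mul_rpow_of_nonneg _ _ hr.le]; ring
    exact (ENNReal.mul_le_mul_iff_right (ENNReal.rpow_pos hlam0 hlamt).ne'
      (ENNReal.rpow_ne_top_of_nonneg hr.le hlamt)).mp hfinal
  -- combine over n
  have hsub2 : {ω | 2*lam < ⨆ t, A t ω} ⊆ (⋃ n:ℕ, G n) ∪ {ω | δ*lam ≤ ⨆ t, B t ω} := by
    intro ω hω
    simp only [Set.mem_setOf_eq] at hω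
    by_cases hb : (⨆ t, B t ω) < δ*lam
    · left
      rw [lt_iSup_iff] at hω
      obtain ⟨t, ht⟩ := hω
      refine Set.mem_iUnion.mpr ⟨⌈t⌉₊, ⟨?_, hb⟩⟩
      exact (ht.le.trans (hAmono ω (Nat.le_ceil t)))
    · right
      exact not_lt.mp hb
  have hGmono : Monotone G := by
    intro i j hij ω hω
    exact ⟨le_trans hω.1 (hAmono ω (by exact_mod_cast hij)), hω.2⟩
  calc P {ω | 2*lam < ⨆ t, A t ω}
      ≤ P ((⋃ n:ℕ, G n) ∪ {ω | δ*lam ≤ ⨆ t, B t ω}) := measure_mono hsub2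
  _ ≤ P (⋃ n:ℕ, G n) + P {ω | δ*lam ≤ ⨆ t, B t ω} := measure_union_le _ _
  _ ≤ (α:ℝ≥0∞) * δ^r * P {ω | lam ≤ ⨆ t, A t ω} + P {ω | δ*lam ≤ ⨆ t, B t ω} := by
      apply add_le_add_left
      rw [Directed.measure_iUnion hGmono.directed_le]
      exact iSup_le hmain

lemma llp_sup_indicator {Ω : Type} (Q : Ω → Prop) (v : ℝ≥0∞) :
    (fun ω => ⨆ (_ : Q ω), v) = Set.indicator {ω | Q ω} (fun _ => v) := by
  funext ω
  by_cases h : Q ω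
  · rw [iSup_pos h, Set.indicator_of_mem (show ω ∈ {ω' | Q ω'} from h)]
  · rw [iSup_neg h, Set.indicator_of_notMem (show ω ∉ {ω' | Q ω'} from h)]
    rfl

lemma llp_core {Ω : Type} [mΩ : MeasurableSpace Ω] (P : Measure Ω)
    (ℱ : Filtration ℝ≥0 mΩ) (A B : ℝ≥0 → Ω → ℝ≥0∞)
    (hA : Adapted ℱ A) (hB : Adapted ℱ B)
    (hAmono : ∀ ω, Monotone fun t => A t ω) (hBmono : ∀ ω, Monotone fun t => B t ω)
    (hArc : ∀ ω t, Tendsto (fun s => A s ω) (nhdsWithin t (Set.Ioi t)) (nhds (A t ω)))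
    (hBrc : ∀ ω t, Tendsto (fun s => B s ω) (nhdsWithin t (Set.Ioi t)) (nhds (B t ω)))
    (r : ℝ) (hr : 0 < r) (α : ℝ≥0)
    (hyp : ∀ S T : Ω → ℝ≥0, IsStoppingTime ℱ (fun ω => (S ω : WithTop ℝ≥0)) →
        IsStoppingTime ℱ (fun ω => (T ω : WithTop ℝ≥0)) → S ≤ T →
        ∫⁻ ω, ((⨆ (s : ℝ≥0) (_ : s < T ω), A s ω) - ⨆ (s : ℝ≥0) (_ : s < S ω), A s ω) ^ r ∂P
          ≤ α * ∫⁻ ω in {ω | S ω < T ω}, (⨆ (s : ℝ≥0) (_ : s < T ω), B s ω) ^ r ∂P)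
    (F : ℝ≥0∞ → ℝ≥0∞) (hFcont : Continuous F) (hFmono : Monotone F) (hF0 : F 0 = 0)
    (c' : ℝ≥0) (hcd : ∀ x, F (2 * x) ≤ (c':ℝ≥0∞) * F x) (m : ℕ)
    (habs : (α:ℝ≥0∞) * ((2:ℝ≥0∞)^(-(m:ℤ)))^r * (c':ℝ≥0∞)^2 ≤ 2⁻¹)
    (hfin : ∫⁻ ω, F (⨆ t, A t ω) ∂P ≠ ⊤) :
    ∫⁻ ω, F (⨆ t, A t ω) ∂P ≤ 2 * (c':ℝ≥0∞)^(m+2) * ∫⁻ ω, F (⨆ t, B t ω) ∂P := by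
  set δ : ℝ≥0∞ := (2:ℝ≥0∞)^(-(m:ℤ)) with hδdef
  have h2z : (2:ℝ≥0∞) ≠ 0 := by norm_num
  have h2t : (2:ℝ≥0∞) ≠ ⊤ := by norm_num
  have hXmeas : Measurable (fun ω => ⨆ t, A t ω) := llp_sup_meas hA hAmono
  have hYmeas : Measurable (fun ω => ⨆ t, B t ω) := llp_sup_meas hB hBmono
  set Δ : ℤ → ℝ≥0∞ := fun j => F ((2:ℝ≥0∞)^(j+1)) - F ((2:ℝ≥0∞)^j) with hΔdef
  -- step 1 : lower bound of ∫ F(A∞) by the layered sum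
  have hset1 : ∀ (j : ℤ) (X : Ω → ℝ≥0∞), Measurable X →
      MeasurableSet {ω | (2:ℝ≥0∞)^j < X ω} := fun j X hX => hX measurableSet_Ioi
  have hset2 : ∀ (j : ℤ) (c : ℝ≥0∞) (X : Ω → ℝ≥0∞), Measurable X →
      MeasurableSet {ω | c ≤ X ω} := fun j c X hX => hX measurableSet_Ici
  have hstep1 : ∫⁻ ω, F (⨆ t, A t ω) ∂P
      ≤ ∑' j : ℤ, Δ j * P {ω | (2:ℝ≥0∞)^j < ⨆ t, A t ω} := by
    calc ∫⁻ ω, F (⨆ t, A t ω) ∂P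
        ≤ ∫⁻ ω, ∑' j : ℤ, ⨆ (_ : (2:ℝ≥0∞)^j < ⨆ t, A t ω), Δ j ∂P :=
          lintegral_mono fun ω => llp_LB hFcont hFmono hF0 _
    _ = ∑' j : ℤ, ∫⁻ ω, ⨆ (_ : (2:ℝ≥0∞)^j < ⨆ t, A t ω), Δ j ∂P := by
        apply lintegral_tsum
        intro j
        rw [llp_sup_indicator (fun ω => (2:ℝ≥0∞)^j < ⨆ t, A t ω) (Δ j)]
        exact (Measurable.indicator measurable_const (hset1 j _ hXmeas)).aemeasurable
    _ = ∑' j : ℤ, Δ j * P {ω | (2:ℝ≥0∞)^j < ⨆ t, A t ω} := by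
        apply tsum_congr
        intro j
        rw [llp_sup_indicator (fun ω => (2:ℝ≥0∞)^j < ⨆ t, A t ω) (Δ j),
          lintegral_indicator_const (hset1 j _ hXmeas)]
  -- step 2 : good-lambda per level
  have hstep2 : ∀ j : ℤ, P {ω | (2:ℝ≥0∞)^j < ⨆ t, A t ω}
      ≤ (α:ℝ≥0∞) * δ^r * P {ω | (2:ℝ≥0∞)^(j-1) ≤ ⨆ t, A t ω}
        + P {ω | (2:ℝ≥0∞)^(j-((m:ℤ)+1)) ≤ ⨆ t, B t ω} := by
    intro j
    have hgl := llp_goodlambda P ℱ A B hA hB hAmono hBmono hArc hBrc r hr α hyp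
      ((2:ℝ≥0∞)^(j-1)) δ (ENNReal.zpow_pos h2z h2t _) (ENNReal.zpow_lt_top h2z h2t _).ne
    have he1 : 2 * (2:ℝ≥0∞)^(j-1) = 2^j := by
      rw [show (2:ℝ≥0∞)^j = 2^(1 + (j-1)) by ring_nf, ENNReal.zpow_add h2z h2t, zpow_one]
    have he2 : δ * (2:ℝ≥0∞)^(j-1) = 2^(j-((m:ℤ)+1)) := by
      rw [hδdef, ← ENNReal.zpow_add h2z h2t]
      congr 1
      ring
    rwa [he1, he2] at hgl
  -- step 3 : resumming
  have hUB1 : ∑' j : ℤ, Δ j * P {ω | (2:ℝ≥0∞)^(j-1) ≤ ⨆ t, A t ω}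
      ≤ (c':ℝ≥0∞)^2 * ∫⁻ ω, F (⨆ t, A t ω) ∂P := by
    have := hset2
    calc ∑' j : ℤ, Δ j * P {ω | (2:ℝ≥0∞)^(j-1) ≤ ⨆ t, A t ω}
        = ∫⁻ ω, ∑' j : ℤ, ⨆ (_ : (2:ℝ≥0∞)^(j-1) ≤ ⨆ t, A t ω), Δ j ∂P := by
          rw [lintegral_tsum (fun j => by
            rw [llp_sup_indicator (fun ω => (2:ℝ≥0∞)^(j-1) ≤ ⨆ t, A t ω) (Δ j)]
            exact (Measurable.indicator measurable_const
              (hset2 j _ _ hXmeas)).aemeasurable)]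
          apply tsum_congr
          intro j
          rw [llp_sup_indicator (fun ω => (2:ℝ≥0∞)^(j-1) ≤ ⨆ t, A t ω) (Δ j),
            lintegral_indicator_const (hset2 j _ _ hXmeas)]
    _ ≤ ∫⁻ ω, (c':ℝ≥0∞)^2 * F (⨆ t, A t ω) ∂P := by
          apply lintegral_mono
          intro ω
          calc (∑' j : ℤ, ⨆ (_ : (2:ℝ≥0∞)^(j-1) ≤ ⨆ t, A t ω), Δ j)
              ≤ F ((2:ℝ≥0∞)^((1:ℤ)+1) * ⨆ t, A t ω) := llp_UB hFmono 1 _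
          _ = F ((2:ℝ≥0∞)^(2:ℕ) * ⨆ t, A t ω) := by
                rw [show ((2:ℝ≥0∞))^((1:ℤ)+1) = (2:ℝ≥0∞)^(2:ℕ) by
                  rw [← zpow_natCast (2:ℝ≥0∞) 2]; norm_num]
          _ ≤ (c':ℝ≥0∞)^2 * F (⨆ t, A t ω) := llp_doub hcd 2 _
    _ = (c':ℝ≥0∞)^2 * ∫⁻ ω, F (⨆ t, A t ω) ∂P :=
          lintegral_const_mul _ (hFcont.measurable.comp hXmeas)
  have hUB2 : ∑' j : ℤ, Δ j * P {ω | (2:ℝ≥0∞)^(j-((m:ℤ)+1)) ≤ ⨆ t, B t ω}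
      ≤ (c':ℝ≥0∞)^(m+2) * ∫⁻ ω, F (⨆ t, B t ω) ∂P := by
    calc ∑' j : ℤ, Δ j * P {ω | (2:ℝ≥0∞)^(j-((m:ℤ)+1)) ≤ ⨆ t, B t ω}
        = ∫⁻ ω, ∑' j : ℤ, ⨆ (_ : (2:ℝ≥0∞)^(j-((m:ℤ)+1)) ≤ ⨆ t, B t ω), Δ j ∂P := by
          rw [lintegral_tsum (fun j => by
            rw [llp_sup_indicator (fun ω => (2:ℝ≥0∞)^(j-((m:ℤ)+1)) ≤ ⨆ t, B t ω) (Δ j)]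
            exact (Measurable.indicator measurable_const
              (hset2 j _ _ hYmeas)).aemeasurable)]
          apply tsum_congr
          intro j
          rw [llp_sup_indicator (fun ω => (2:ℝ≥0∞)^(j-((m:ℤ)+1)) ≤ ⨆ t, B t ω) (Δ j),
            lintegral_indicator_const (hset2 j _ _ hYmeas)]
    _ ≤ ∫⁻ ω, (c':ℝ≥0∞)^(m+2) * F (⨆ t, B t ω) ∂P := by
          apply lintegral_mono
          intro ω
          calc (∑' j : ℤ, ⨆ (_ : (2:ℝ≥0∞)^(j-((m:ℤ)+1)) ≤ ⨆ t, B t ω), Δ j)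
              ≤ F ((2:ℝ≥0∞)^(((m:ℤ)+1)+1) * ⨆ t, B t ω) := llp_UB hFmono ((m:ℤ)+1) _
          _ = F ((2:ℝ≥0∞)^(m+2:ℕ) * ⨆ t, B t ω) := by
                rw [show ((2:ℝ≥0∞))^(((m:ℤ)+1)+1) = (2:ℝ≥0∞)^(m+2:ℕ) by
                  rw [← zpow_natCast (2:ℝ≥0∞) (m+2)]
                  congr 1]
          _ ≤ (c':ℝ≥0∞)^(m+2) * F (⨆ t, B t ω) := llp_doub hcd (m+2) _
    _ = (c':ℝ≥0∞)^(m+2) * ∫⁻ ω, F (⨆ t, B t ω) ∂P :=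
          lintegral_const_mul _ (hFcont.measurable.comp hYmeas)
  -- assemble
  have hmain : ∫⁻ ω, F (⨆ t, A t ω) ∂P
      ≤ ((α:ℝ≥0∞) * δ^r * (c':ℝ≥0∞)^2) * ∫⁻ ω, F (⨆ t, A t ω) ∂P
        + (c':ℝ≥0∞)^(m+2) * ∫⁻ ω, F (⨆ t, B t ω) ∂P := by
    calc ∫⁻ ω, F (⨆ t, A t ω) ∂P
        ≤ ∑' j : ℤ, Δ j * P {ω | (2:ℝ≥0∞)^j < ⨆ t, A t ω} := hstep1
    _ ≤ ∑' j : ℤ, Δ j * ((α:ℝ≥0∞) * δ^r * P {ω | (2:ℝ≥0∞)^(j-1) ≤ ⨆ t, A t ω}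
          + P {ω | (2:ℝ≥0∞)^(j-((m:ℤ)+1)) ≤ ⨆ t, B t ω}) :=
        ENNReal.tsum_le_tsum fun j => mul_le_mul_right (hstep2 j) _
    _ = (α:ℝ≥0∞) * δ^r * (∑' j : ℤ, Δ j * P {ω | (2:ℝ≥0∞)^(j-1) ≤ ⨆ t, A t ω})
          + ∑' j : ℤ, Δ j * P {ω | (2:ℝ≥0∞)^(j-((m:ℤ)+1)) ≤ ⨆ t, B t ω} := by
        rw [← ENNReal.tsum_mul_left, ← ENNReal.tsum_add]
        apply tsum_congr
        intro j
        ring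
    _ ≤ (α:ℝ≥0∞) * δ^r * ((c':ℝ≥0∞)^2 * ∫⁻ ω, F (⨆ t, A t ω) ∂P)
          + (c':ℝ≥0∞)^(m+2) * ∫⁻ ω, F (⨆ t, B t ω) ∂P :=
        add_le_add (mul_le_mul_right hUB1 _) hUB2
    _ = ((α:ℝ≥0∞) * δ^r * (c':ℝ≥0∞)^2) * ∫⁻ ω, F (⨆ t, A t ω) ∂P
          + (c':ℝ≥0∞)^(m+2) * ∫⁻ ω, F (⨆ t, B t ω) ∂P := by ring_nf
  -- absorption
  set I := ∫⁻ ω, F (⨆ t, A t ω) ∂P with hIdef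
  set J := (c':ℝ≥0∞)^(m+2) * ∫⁻ ω, F (⨆ t, B t ω) ∂P with hJdef
  have hI2 : I ≤ 2⁻¹ * I + J := by
    refine hmain.trans (add_le_add_left (mul_le_mul_left habs _) _)
  have hhalf : I - I/2 ≤ J := by
    rw [tsub_le_iff_right]
    calc I ≤ 2⁻¹ * I + J := hI2
    _ = J + I/2 := by rw [add_comm]; congr 1; rw [ENNReal.div_eq_inv_mul]
  rw [ENNReal.sub_half hfin] at hhalf
  calc I = 2 * (I/2) := by
        rw [ENNReal.div_eq_inv_mul, ← mul_assoc, ENNReal.mul_inv_cancel h2z h2t, one_mul]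
  _ ≤ 2 * J := mul_le_mul_right hhalf _
  _ = 2 * (c':ℝ≥0∞)^(m+2) * ∫⁻ ω, F (⨆ t, B t ω) ∂P := by rw [hJdef, mul_assoc]

lemma llp_inf_sub (a b N : ℝ≥0∞) : a ⊓ N - b ⊓ N ≤ a - b := by
  rw [tsub_le_iff_right]
  rcases le_total b N with hbN | hbN
  · rw [inf_eq_left.mpr hbN]
    exact inf_le_left.trans le_tsub_add
  · rw [inf_eq_right.mpr hbN]
    exact inf_le_right.trans le_add_self


/-- Lemma of Lenglart–Lépingle–Pratelli (Lemma 4.11): if `A`, `B` are adapted increasing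
right-continuous processes such that `E(A_(T-) − A_(S-))^r ≤ α E[B_(T-)^r 1_(S<T)]` for all
stopping times `S ≤ T`, then `E F(A_∞) ≲_(r,α,F) E F(B_∞)` for every moderate function `F`.
Here left limits of increasing processes are realized as `sup` over earlier times. -/
theorem lenglart_lepingle_pratelli (r : ℝ) (hr : 0 < r) (α : ℝ≥0) (hα : 0 < α)
    (F : ℝ≥0∞ → ℝ≥0∞) (hFcont : Continuous F) (hFmono : Monotone F) (hF0 : F 0 = 0)
    (hFmod : ∃ c : ℝ≥0, ∀ x : ℝ≥0∞, F (2 * x) ≤ c * F x) :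
    ∃ C : ℝ≥0, ∀ {Ω : Type} [mΩ : MeasurableSpace Ω] (P : Measure Ω),
      IsProbabilityMeasure P → ∀ (ℱ : Filtration ℝ≥0 mΩ) (A B : ℝ≥0 → Ω → ℝ≥0∞),
      Adapted ℱ A → Adapted ℱ B →
      (∀ ω, Monotone fun t => A t ω) → (∀ ω, Monotone fun t => B t ω) →
      (∀ ω t, Tendsto (fun s => A s ω) (nhdsWithin t (Set.Ioi t)) (nhds (A t ω))) →
      (∀ ω t, Tendsto (fun s => B s ω) (nhdsWithin t (Set.Ioi t)) (nhds (B t ω))) →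
      (∀ S T : Ω → ℝ≥0, IsStoppingTime ℱ (fun ω => (S ω : WithTop ℝ≥0)) →
        IsStoppingTime ℱ (fun ω => (T ω : WithTop ℝ≥0)) → S ≤ T →
        ∫⁻ ω, ((⨆ (s : ℝ≥0) (_ : s < T ω), A s ω) - ⨆ (s : ℝ≥0) (_ : s < S ω), A s ω) ^ r ∂P
          ≤ α * ∫⁻ ω in {ω | S ω < T ω}, (⨆ (s : ℝ≥0) (_ : s < T ω), B s ω) ^ r ∂P) →
      ∫⁻ ω, F (⨆ t, A t ω) ∂P ≤ C * ∫⁻ ω, F (⨆ t, B t ω) ∂P := by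
  classical
  obtain ⟨c, hc⟩ := hFmod
  set c' : ℝ≥0 := max c 1 with hc'def
  have hc'1 : (1:ℝ≥0) ≤ c' := le_max_right _ _
  have hc'0 : (0:ℝ≥0) < c' := lt_of_lt_of_le one_pos hc'1
  have hcd : ∀ x, F (2 * x) ≤ (c':ℝ≥0∞) * F x := fun x =>
    (hc x).trans (mul_le_mul_left (by exact_mod_cast le_max_left c 1) _)
  have h2z : (2:ℝ≥0∞) ≠ 0 := by norm_num
  have h2t : (2:ℝ≥0∞) ≠ ⊤ := by norm_num
  -- choose m
  obtain ⟨n₀, hn₀⟩ := exists_nat_ge (2 * α * c'^2 : ℝ≥0)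
  obtain ⟨k, hk⟩ := exists_nat_ge (1/r : ℝ)
  set m : ℕ := (k+1) * (n₀+1) with hmdef
  have hexp : ((n₀:ℕ):ℝ) ≤ ((m:ℕ):ℝ) * r := by
    have hkr : 1 ≤ (k:ℝ) * r := by
      rw [div_le_iff₀ hr] at hk; linarith
    have h1 : (1:ℝ) ≤ ((k:ℝ)+1) * r := by nlinarith [hr.le]
    have h2 : ((n₀:ℝ)+1) * 1 ≤ ((n₀:ℝ)+1) * (((k:ℝ)+1) * r) :=
      mul_le_mul_of_nonneg_left h1 (by positivity)
    have hm : ((m:ℕ):ℝ) = ((k:ℝ)+1) * ((n₀:ℝ)+1) := by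
      rw [hmdef]; push_cast; ring
    rw [hm]; nlinarith
  have h2m : ((n₀:ℕ):ℝ≥0∞) ≤ ((2:ℝ≥0∞)^m)^r := by
    calc ((n₀:ℕ):ℝ≥0∞) ≤ (2:ℝ≥0∞)^n₀ := by
          exact_mod_cast Nat.cast_le.mpr (Nat.lt_two_pow_self (n := n₀)).le
    _ = (2:ℝ≥0∞)^((n₀:ℕ):ℝ) := (ENNReal.rpow_natCast 2 n₀).symm
    _ ≤ (2:ℝ≥0∞)^(((m:ℕ):ℝ) * r) := ENNReal.rpow_le_rpow_of_exponent_le one_le_two hexp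
    _ = ((2:ℝ≥0∞)^(((m:ℕ):ℝ)))^r := ENNReal.rpow_mul 2 _ r
    _ = ((2:ℝ≥0∞)^m)^r := by rw [ENNReal.rpow_natCast]
  have habs : (α:ℝ≥0∞) * ((2:ℝ≥0∞)^(-(m:ℤ)))^r * (c':ℝ≥0∞)^2 ≤ 2⁻¹ := by
    have hδr : ((2:ℝ≥0∞)^(-(m:ℤ)))^r = (((2:ℝ≥0∞)^m)^r)⁻¹ := by
      rw [ENNReal.zpow_neg, zpow_natCast, ENNReal.inv_rpow]
    set x : ℝ≥0∞ := (α:ℝ≥0∞) * (c':ℝ≥0∞)^2 with hxdef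
    have hx0 : x ≠ 0 := by
      rw [hxdef]
      exact mul_ne_zero (by exact_mod_cast hα.ne') (pow_ne_zero 2 (by exact_mod_cast hc'0.ne'))
    have hxt : x ≠ ⊤ := by
      rw [hxdef]
      exact (ENNReal.mul_lt_top ENNReal.coe_lt_top
        (ENNReal.pow_lt_top ENNReal.coe_lt_top)).ne
    have hn₀x : 2 * x ≤ ((n₀:ℕ):ℝ≥0∞) := by
      rw [hxdef]
      calc 2 * ((α:ℝ≥0∞) * (c':ℝ≥0∞)^2) = ((2 * α * c'^2 : ℝ≥0) : ℝ≥0∞) := by push_cast; ring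
      _ ≤ ((n₀:ℕ):ℝ≥0∞) := by exact_mod_cast hn₀
    calc (α:ℝ≥0∞) * ((2:ℝ≥0∞)^(-(m:ℤ)))^r * (c':ℝ≥0∞)^2
        = x * (((2:ℝ≥0∞)^m)^r)⁻¹ := by rw [hδr, hxdef]; ring
    _ ≤ x * (2*x)⁻¹ := by
        apply mul_le_mul_right
        exact ENNReal.inv_le_inv.mpr (hn₀x.trans h2m)
    _ = 2⁻¹ * (x * x⁻¹) := by
        rw [ENNReal.mul_inv (Or.inl h2z) (Or.inl h2t)]; ring
    _ ≤ 2⁻¹ * 1 := mul_le_mul_right (ENNReal.mul_inv_le_one x) _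
    _ = 2⁻¹ := mul_one _
  refine ⟨2 * c'^(m+2), ?_⟩
  intro Ω mΩ P hP ℱ A B hA hB hAm hBm hArc hBrc hyp
  have hXmeas : Measurable (fun ω => ⨆ t, A t ω) := llp_sup_meas hA hAm
  have hYmeas : Measurable (fun ω => ⨆ t, B t ω) := llp_sup_meas hB hBm
  -- truncated processes
  have hcore : ∀ N : ℕ,
      ∫⁻ ω, F ((⨆ t, A t ω) ⊓ (N:ℝ≥0∞)) ∂P
        ≤ 2 * (c':ℝ≥0∞)^(m+2) * ∫⁻ ω, F (⨆ t, B t ω) ∂P := by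
    intro N
    set AN : ℝ≥0 → Ω → ℝ≥0∞ := fun t ω => A t ω ⊓ (N:ℝ≥0∞) with hANdef
    have hANsup : ∀ ω, (⨆ t, AN t ω) = (⨆ t, A t ω) ⊓ (N:ℝ≥0∞) :=
      fun ω => (iSup_inf_eq (fun t => A t ω) ((N:ℝ≥0∞))).symm
    have hANad : Adapted ℱ AN := fun t =>
      (((hA t).min measurable_const))
    have hANmono : ∀ ω, Monotone fun t => AN t ω := fun ω => (hAm ω).inf monotone_const
    have hANrc : ∀ ω t, Tendsto (fun s => AN s ω) (nhdsWithin t (Set.Ioi t))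
        (nhds (AN t ω)) := fun ω t => (hArc ω t).min tendsto_const_nhds
    have hypN : ∀ S T : Ω → ℝ≥0, IsStoppingTime ℱ (fun ω => (S ω : WithTop ℝ≥0)) →
        IsStoppingTime ℱ (fun ω => (T ω : WithTop ℝ≥0)) → S ≤ T →
        ∫⁻ ω, ((⨆ (s : ℝ≥0) (_ : s < T ω), AN s ω) - ⨆ (s : ℝ≥0) (_ : s < S ω), AN s ω) ^ r ∂P
          ≤ α * ∫⁻ ω in {ω | S ω < T ω}, (⨆ (s : ℝ≥0) (_ : s < T ω), B s ω) ^ r ∂P := by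
      intro S T hS hT hST
      have hsupeq : ∀ (g : Ω → ℝ≥0) (ω : Ω),
          (⨆ (s : ℝ≥0) (_ : s < g ω), AN s ω)
            = (⨆ (s : ℝ≥0) (_ : s < g ω), A s ω) ⊓ (N:ℝ≥0∞) := by
        intro g ω
        calc (⨆ (s : ℝ≥0) (_ : s < g ω), AN s ω)
            = ⨆ (s : ℝ≥0), ((⨆ (_ : s < g ω), A s ω) ⊓ (N:ℝ≥0∞)) := by
              apply iSup_congr
              intro s
              by_cases hs : s < g ω
              · rw [iSup_pos hs, iSup_pos hs]
              · rw [iSup_neg hs, iSup_neg hs]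
                simp
        _ = (⨆ (s : ℝ≥0) (_ : s < g ω), A s ω) ⊓ (N:ℝ≥0∞) :=
              (iSup_inf_eq (fun s => ⨆ (_ : s < g ω), A s ω) ((N:ℝ≥0∞))).symm
      calc ∫⁻ ω, ((⨆ (s : ℝ≥0) (_ : s < T ω), AN s ω)
              - ⨆ (s : ℝ≥0) (_ : s < S ω), AN s ω) ^ r ∂P
          ≤ ∫⁻ ω, ((⨆ (s : ℝ≥0) (_ : s < T ω), A s ω)
              - ⨆ (s : ℝ≥0) (_ : s < S ω), A s ω) ^ r ∂P := by
            apply lintegral_mono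
            intro ω
            apply ENNReal.rpow_le_rpow _ hr.le
            rw [hsupeq T ω, hsupeq S ω]
            exact llp_inf_sub _ _ _
      _ ≤ _ := hyp S T hS hT hST
    have hfinN : ∫⁻ ω, F (⨆ t, AN t ω) ∂P ≠ ⊤ := by
      have hle : ∫⁻ ω, F (⨆ t, AN t ω) ∂P ≤ F ((N:ℝ≥0∞)) := by
        calc ∫⁻ ω, F (⨆ t, AN t ω) ∂P ≤ ∫⁻ _ω, F ((N:ℝ≥0∞)) ∂P := by
              apply lintegral_mono
              intro ω
              exact hFmono (iSup_le fun t => inf_le_right)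
        _ = F ((N:ℝ≥0∞)) := by rw [lintegral_const, measure_univ, mul_one]
      exact ne_top_of_le_ne_top (llp_fin hFmono hFcont hF0 hcd ENNReal.coe_ne_top) hle
    have := llp_core P ℱ AN B hANad hB hANmono hBm hANrc hBrc r hr α hypN
      F hFcont hFmono hF0 c' hcd m habs hfinN
    calc ∫⁻ ω, F ((⨆ t, A t ω) ⊓ (N:ℝ≥0∞)) ∂P
        = ∫⁻ ω, F (⨆ t, AN t ω) ∂P := by
          apply lintegral_congr
          intro ω
          rw [hANsup ω]
    _ ≤ _ := this
  -- monotone limit in N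
  have hmeasN : ∀ N : ℕ, Measurable fun ω => F ((⨆ t, A t ω) ⊓ (N:ℝ≥0∞)) := fun N =>
    hFcont.measurable.comp (hXmeas.min measurable_const)
  have hmono3 : Monotone (fun (N:ℕ) => fun ω => F ((⨆ t, A t ω) ⊓ (N:ℝ≥0∞))) := by
    intro N M h ω
    exact hFmono (inf_le_inf_left _ (by exact_mod_cast Nat.cast_le.mpr h))
  have hlim : ∫⁻ ω, F (⨆ t, A t ω) ∂P
      = ⨆ N:ℕ, ∫⁻ ω, F ((⨆ t, A t ω) ⊓ (N:ℝ≥0∞)) ∂P := by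
    rw [← lintegral_iSup hmeasN hmono3]
    apply lintegral_congr
    intro ω
    have hminf : Monotone (fun N:ℕ => (⨆ t, A t ω) ⊓ (N:ℝ≥0∞)) := by
      intro N M h
      exact inf_le_inf_left _ (by exact_mod_cast Nat.cast_le.mpr h)
    have hsupN : (⨆ N:ℕ, ((⨆ t, A t ω) ⊓ (N:ℝ≥0∞))) = ⨆ t, A t ω := by
      rw [← inf_iSup_eq (⨆ t, A t ω) (fun N:ℕ => (N:ℝ≥0∞)), ENNReal.iSup_natCast, inf_top_eq]
    have h1 : Tendsto (fun N:ℕ => (⨆ t, A t ω) ⊓ (N:ℝ≥0∞)) atTop (nhds (⨆ t, A t ω)) := by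
      have := tendsto_atTop_iSup hminf
      rwa [hsupN] at this
    have h2 := (hFcont.tendsto _).comp h1
    have h3 := tendsto_atTop_iSup (fun N M h =>
      hFmono (hminf h) : Monotone fun N:ℕ => F ((⨆ t, A t ω) ⊓ (N:ℝ≥0∞)))
    exact tendsto_nhds_unique h2 h3
  rw [hlim]
  apply iSup_le
  intro N
  calc ∫⁻ ω, F ((⨆ t, A t ω) ⊓ (N:ℝ≥0∞)) ∂P
      ≤ 2 * (c':ℝ≥0∞)^(m+2) * ∫⁻ ω, F (⨆ t, B t ω) ∂P := hcore N
  _ = ((2 * c'^(m+2) : ℝ≥0) : ℝ≥0∞) * ∫⁻ ω, F (⨆ t, B t ω) ∂P := by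
      push_cast
      ring
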